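/- Let a, b, c be pairwise coprime positive integers and let T(x) denote the number of triples (x_1, x_2, x_3) ∈ ℕ³ with x_1·a + x_2·b + x_3·c = x. Then T(x)/x² tends to 1/(2abc) as x → ∞ over the natural numbers. -/

import Mathlib

open Filter

section Aux
open Finset

lemma two_var_card (a b : ℕ) (ha : 0 < a) (hb : 0 < b) (hab : Nat.Coprime a b) (y : ℕ) :
    ∃ v : ℕ, {p : ℕ × ℕ | p.1 * a + p.2 * b = y}.ncard
      = Nat.count (fun x => x ≡ v [MOD b]) (y / a + 1) := by
  haveI : NeZero b := ⟨hb.ne'⟩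
  have hu : IsUnit (a : ZMod b) := (ZMod.isUnit_iff_coprime a b).mpr hab
  set w : ZMod b := (y : ZMod b) * (a : ZMod b)⁻¹ with hw
  refine ⟨w.val, ?_⟩
  have hvw : ((w.val : ℕ) : ZMod b) = w := ZMod.natCast_rightInverse w
  have hmod : ∀ x1 : ℕ, (x1 ≡ w.val [MOD b]) ↔ ((x1 : ZMod b) * a = y) := by
    intro x1
    rw [← ZMod.natCast_eq_natCast_iff, hvw]
    constructor
    · intro h
      rw [h, hw, mul_assoc, ZMod.inv_mul_of_unit _ hu, mul_one]
    · intro h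
      rw [hw, ← h, mul_assoc, ZMod.mul_inv_of_unit _ hu, mul_one]
  have hset : {p : ℕ × ℕ | p.1 * a + p.2 * b = y}
      = ↑((((range (y/a+1)).filter (fun x1 => x1 ≡ w.val [MOD b])).image
          (fun x1 => (x1, (y - x1*a)/b)))) := by
    ext ⟨x1, x2⟩
    simp only [Set.mem_setOf_eq, coe_image, Set.mem_image, coe_filter, mem_range,
      Set.mem_setOf_eq, Prod.mk.injEq]
    constructor
    · intro h
      refine ⟨x1, ⟨?_, ?_⟩, rfl, ?_⟩
      · have : x1 * a ≤ y := le_of_add_le_left h.le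
        exact Nat.lt_succ_of_le ((Nat.le_div_iff_mul_le ha).mpr this)
      · rw [hmod]
        have : ((x1 * a + x2 * b : ℕ) : ZMod b) = y := by exact_mod_cast congrArg _ h
        push_cast at this
        rw [ZMod.natCast_self, mul_zero, add_zero] at this
        exact this
      · have hx : x2 * b = y - x1 * a := by omega
        rw [← hx, Nat.mul_div_cancel _ hb]
    · rintro ⟨z, ⟨hz1, hz2⟩, rfl, rfl⟩
      have hza : z * a ≤ y := (Nat.le_div_iff_mul_le ha).mp (Nat.lt_succ_iff.mp hz1)
      have hdvd : b ∣ y - z * a := by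
        rw [hmod] at hz2
        have : z * a ≡ y [MOD b] := by
          rw [← ZMod.natCast_eq_natCast_iff]; push_cast; exact hz2
        exact (Nat.modEq_iff_dvd' hza).mp this
      rw [Nat.div_mul_cancel hdvd]
      omega
  rw [hset, Set.ncard_coe_finset, Finset.card_image_of_injective _
    (fun u v huv => (Prod.mk.injEq _ _ _ _ ▸ huv).1), Nat.count_eq_card_filter_range]

lemma two_var_bound (a b : ℕ) (ha : 0 < a) (hb : 0 < b) (hab : Nat.Coprime a b) (y : ℕ) :
    (y:ℝ)/(a*b) - 2 ≤ ({p : ℕ × ℕ | p.1 * a + p.2 * b = y}.ncard : ℝ) ∧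
    ({p : ℕ × ℕ | p.1 * a + p.2 * b = y}.ncard : ℝ) ≤ (y:ℝ)/(a*b) + 2 := by
  obtain ⟨v, hv⟩ := two_var_card a b ha hb hab y
  rw [hv]
  set N := Nat.count (fun x => x ≡ v [MOD b]) (y/a+1) with hN
  have hc : (N : ℤ) = ⌈((((y/a+1 : ℕ)):ℚ) - ((v % b : ℕ):ℚ)) / (b:ℚ)⌉ :=
    Nat.count_modEq_card_eq_ceil (y/a+1) hb v
  set n : ℚ := ((y/a+1 : ℕ) : ℚ) with hn
  set m : ℚ := ((v % b : ℕ) : ℚ) with hm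
  set Q : ℚ := (n - m)/(b:ℚ) with hQ
  have hbq : (0:ℚ) < b := by exact_mod_cast hb
  have haq : (0:ℚ) < a := by exact_mod_cast ha
  have hQb : Q * b = n - m := div_mul_cancel₀ _ hbq.ne'
  have hq1 : Q ≤ (N:ℚ) := by
    have := Int.le_ceil Q
    rw [← hc] at this; exact_mod_cast this
  have hq2 : (N:ℚ) < Q + 1 := by
    have := Int.ceil_lt_add_one Q
    rw [← hc] at this; exact_mod_cast this
  have hmb : m < b := by rw [hm]; exact_mod_cast Nat.mod_lt v hb
  have hm0 : 0 ≤ m := by positivity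
  have h2 : y < a * (y / a) + a := by
    have h0 : y % a < a := Nat.mod_lt y ha
    have h1 : a * (y/a) + y % a = y := Nat.div_add_mod y a
    linarith
  have h3 : y < (y/a + 1) * a := by
    rw [Nat.add_mul, Nat.one_mul, Nat.mul_comm]; exact h2
  have hya : (y:ℚ) < n * a := by rw [hn]; exact_mod_cast h3
  have hya2 : (n - 1) * a ≤ (y:ℚ) := by
    have h4 : ((y/a : ℕ):ℚ) * a ≤ (y:ℚ) := by exact_mod_cast Nat.div_mul_le_self y a
    have h5 : n - 1 = ((y/a : ℕ):ℚ) := by rw [hn]; push_cast; ring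
    rw [h5]; exact h4
  have hN0 : (0:ℚ) ≤ N := by positivity
  have hab' : (0:ℚ) < (a:ℚ)*(b:ℚ) := by positivity
  have hbq1 : (1:ℚ) ≤ b := by exact_mod_cast hb
  constructor
  · have key : (y:ℚ)/(a*b) - 2 ≤ (N:ℚ) := by
      rw [div_sub' hab'.ne', div_le_iff₀ hab']
      have s0 : n - m ≤ (N:ℚ) * b := by
        rw [← hQb]; exact mul_le_mul_of_nonneg_right hq1 hbq.le
      have s1 : n ≤ (N:ℚ)*b + b := by linarith
      have s3 : (n:ℚ)*a ≤ ((N:ℚ)*b + b)*a := mul_le_mul_of_nonneg_right s1 haq.le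
      nlinarith [s3, hya, mul_le_mul_of_nonneg_left hbq1 haq.le]
    have := (Rat.cast_le (K := ℝ)).mpr key
    push_cast at this ⊢
    linarith
  · have key : (N:ℚ) ≤ (y:ℚ)/(a*b) + 2 := by
      rw [div_add' _ _ _ hab'.ne', le_div_iff₀ hab']
      have s0 : (N:ℚ) * b ≤ n - m + b := by
        nlinarith [mul_le_mul_of_nonneg_right hq2.le hbq.le]
      have s1 : (N:ℚ)*b ≤ n + b := by linarith
      have s2 : (N:ℚ)*b*a ≤ (n + b)*a := mul_le_mul_of_nonneg_right s1 haq.le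
      nlinarith [s2, hya2, mul_le_mul_of_nonneg_left hbq1 haq.le]
    have := (Rat.cast_le (K := ℝ)).mpr key
    push_cast at this ⊢
    linarith

lemma set_eq_two (a b : ℕ) (ha : 0 < a) (hb : 0 < b) (y : ℕ) :
    {p : ℕ × ℕ | p.1 * a + p.2 * b = y}
      = ↑(((range (y+1)) ×ˢ (range (y+1))).filter (fun p => p.1 * a + p.2 * b = y)) := by
  ext ⟨u, v⟩
  simp only [Set.mem_setOf_eq, coe_filter, mem_product, mem_range, Set.mem_setOf_eq]
  constructor
  · intro h
    have hu : u ≤ u * a := Nat.le_mul_of_pos_right u ha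
    have hv : v ≤ v * b := Nat.le_mul_of_pos_right v hb
    omega
  · tauto

lemma set_eq_three (a b c : ℕ) (ha : 0 < a) (hb : 0 < b) (hc : 0 < c) (x : ℕ) :
    {p : ℕ × ℕ × ℕ | p.1 * a + p.2.1 * b + p.2.2 * c = x}
      = ↑(((range (x+1)) ×ˢ (range (x+1)) ×ˢ (range (x+1))).filter
          (fun p => p.1 * a + p.2.1 * b + p.2.2 * c = x)) := by
  ext ⟨u, v, w⟩
  simp only [Set.mem_setOf_eq, coe_filter, mem_product, mem_range, Set.mem_setOf_eq]
  constructor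
  · intro h
    have hu : u ≤ u * a := Nat.le_mul_of_pos_right u ha
    have hv : v ≤ v * b := Nat.le_mul_of_pos_right v hb
    have hw : w ≤ w * c := Nat.le_mul_of_pos_right w hc
    omega
  · tauto

lemma decomp (a b c : ℕ) (ha : 0 < a) (hb : 0 < b) (hc : 0 < c) (x : ℕ) :
    {p : ℕ × ℕ × ℕ | p.1 * a + p.2.1 * b + p.2.2 * c = x}.ncard
      = ∑ k ∈ range (x/c + 1), {p : ℕ × ℕ | p.1 * a + p.2 * b = x - k*c}.ncard := by
  rw [set_eq_three a b c ha hb hc x, Set.ncard_coe_finset]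
  rw [Finset.sum_congr rfl (fun k _ => by rw [set_eq_two a b ha hb (x - k*c), Set.ncard_coe_finset])]
  rw [← Finset.card_sigma]
  apply Finset.card_nbij' (i := fun p => ⟨p.2.2, (p.1, p.2.1)⟩)
    (j := fun q => (q.2.1, q.2.2, q.1))
  · rintro ⟨u, v, w⟩ hp
    simp only [mem_coe, mem_filter, mem_product, mem_range] at hp
    obtain ⟨⟨hu, hv, hw⟩, heq⟩ := hp
    simp only [mem_coe, Finset.mem_sigma, mem_filter, mem_product, mem_range]
    have hwc : w * c ≤ x := by omega
    have hu' : u ≤ u * a := Nat.le_mul_of_pos_right u ha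
    have hv' : v ≤ v * b := Nat.le_mul_of_pos_right v hb
    refine ⟨Nat.lt_succ_of_le ((Nat.le_div_iff_mul_le hc).mpr hwc), ⟨?_, ?_⟩, by omega⟩
    · omega
    · omega
  · rintro ⟨k, u, v⟩ hq
    simp only [mem_coe, Finset.mem_sigma, mem_filter, mem_product, mem_range] at hq
    obtain ⟨hk, ⟨hu, hv⟩, heq⟩ := hq
    have hkc : k * c ≤ x := (Nat.le_div_iff_mul_le hc).mp (Nat.lt_succ_iff.mp hk)
    simp only [mem_coe, mem_filter, mem_product, mem_range]
    have hk' : k ≤ k * c := Nat.le_mul_of_pos_right k hc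
    have hu' : u ≤ u * a := Nat.le_mul_of_pos_right u ha
    have hv' : v ≤ v * b := Nat.le_mul_of_pos_right v hb
    refine ⟨⟨by omega, by omega, by omega⟩, by omega⟩
  · rintro ⟨u, v, w⟩ _; rfl
  · rintro ⟨k, u, v⟩ _; rfl

lemma T_bounds (a b c : ℕ) (ha : 0 < a) (hb : 0 < b) (hc : 0 < c)
    (hab : Nat.Coprime a b) (x : ℕ) :
    ((x:ℝ)^2/(2*c))/(a*b) - 2*((x:ℝ)/c + 1)
      ≤ ({p : ℕ × ℕ × ℕ | p.1 * a + p.2.1 * b + p.2.2 * c = x}.ncard : ℝ) ∧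
    (({p : ℕ × ℕ × ℕ | p.1 * a + p.2.1 * b + p.2.2 * c = x}.ncard : ℝ))
      ≤ (((x:ℝ)+c)^2/(2*c))/(a*b) + 2*((x:ℝ)/c + 1) := by
  have hcr : (0:ℝ) < c := by exact_mod_cast hc
  have habr : (0:ℝ) < (a:ℝ)*b := by
    have : (0:ℝ) < a := by exact_mod_cast ha
    have : (0:ℝ) < b := by exact_mod_cast hb
    positivity
  set m := x / c with hm
  have hTsum : ({p : ℕ × ℕ × ℕ | p.1 * a + p.2.1 * b + p.2.2 * c = x}.ncard : ℝ)
      = ∑ k ∈ range (m+1), ({p : ℕ × ℕ | p.1 * a + p.2 * b = x - k*c}.ncard : ℝ) := by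
    rw [decomp a b c ha hb hc x]; push_cast; rfl
  -- cast of x - k*c
  have hcast : ∀ k ∈ range (m+1), ((x - k*c : ℕ) : ℝ) = (x:ℝ) - (k:ℝ)*c := by
    intro k hk
    rw [mem_range, Nat.lt_succ_iff] at hk
    have : k * c ≤ x := (Nat.le_div_iff_mul_le hc).mp hk
    push_cast [Nat.cast_sub this]; ring
  -- the linear sum
  have hS : ∑ k ∈ range (m+1), ((x:ℝ) - (k:ℝ)*c)
      = ((m:ℝ)+1)*x - c*((m:ℝ)*((m:ℝ)+1)/2) := by
    rw [Finset.sum_sub_distrib, Finset.sum_const, card_range, ← Finset.sum_mul]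
    have hg : (∑ k ∈ range (m+1), (k:ℝ)) = (m:ℝ)*((m:ℝ)+1)/2 := by
      have := Finset.sum_range_id_mul_two (m+1)
      have h2 : ((∑ i ∈ range (m+1), i) * 2 : ℕ) = ((m+1) * m : ℕ) := by
        rw [this]; simp
      have h3 := congrArg (Nat.cast (R := ℝ)) h2
      push_cast at h3
      linarith
    rw [hg]; push_cast; ring
  have hcm : (c:ℝ)*m ≤ x := by
    have : m * c ≤ x := Nat.div_mul_le_self x c
    have := (Nat.cast_le (α := ℝ)).mpr this
    push_cast at this; linarith
  have hxcm : (x:ℝ) < c*((m:ℝ)+1) := by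
    have h0 : x % c < c := Nat.mod_lt x hc
    have h1 : c * (x/c) + x % c = x := Nat.div_add_mod x c
    have h2 : x < c * m + c := by rw [hm]; omega
    have := (Nat.cast_lt (α := ℝ)).mpr h2
    push_cast at this; linarith
  have hm0 : (0:ℝ) ≤ m := Nat.cast_nonneg m
  have hx0 : (0:ℝ) ≤ x := Nat.cast_nonneg x
  -- bound on m+1 vs x/c + 1
  have hm1 : (m:ℝ) + 1 ≤ (x:ℝ)/c + 1 := by
    have : (m:ℝ) ≤ (x:ℝ)/c := by rw [le_div_iff₀ hcr]; linarith
    linarith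
  -- sum bounds
  set S : ℝ := ((m:ℝ)+1)*x - c*((m:ℝ)*((m:ℝ)+1)/2) with hSdef
  have hSlow : (x:ℝ)^2/(2*c) ≤ S := by
    rw [hSdef, div_le_iff₀ (by positivity)]
    nlinarith [mul_le_mul_of_nonneg_right hcm (mul_pos hcr (by linarith : (0:ℝ) < (m:ℝ)+1)).le,
      mul_le_mul_of_nonneg_right hxcm.le hx0]
  have hShigh : S ≤ ((x:ℝ)+c)^2/(2*c) := by
    rw [hSdef, le_div_iff₀ (by positivity)]
    nlinarith [mul_le_mul_of_nonneg_right hcm ((by linarith : (0:ℝ) ≤ 2*x - c*m)),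
      mul_le_mul_of_nonneg_left hcm hcr.le]
  constructor
  · rw [hTsum]
    have hlow : ∑ k ∈ range (m+1), (((x:ℝ) - (k:ℝ)*c)/(a*b) - 2)
        ≤ ∑ k ∈ range (m+1), ({p : ℕ × ℕ | p.1 * a + p.2 * b = x - k*c}.ncard : ℝ) := by
      apply Finset.sum_le_sum
      intro k hk
      have := (two_var_bound a b ha hb hab (x - k*c)).1
      rw [hcast k hk] at this; exact this
    have hsum : ∑ k ∈ range (m+1), (((x:ℝ) - (k:ℝ)*c)/(a*b) - 2)
        = S/(a*b) - 2*((m:ℝ)+1) := by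
      rw [Finset.sum_sub_distrib, ← Finset.sum_div, hS, Finset.sum_const, card_range]
      push_cast; ring
    rw [hsum] at hlow
    have : ((x:ℝ)^2/(2*c))/(a*b) - 2*((x:ℝ)/c+1) ≤ S/(a*b) - 2*((m:ℝ)+1) := by
      have h1 : ((x:ℝ)^2/(2*c))/(a*b) ≤ S/(a*b) := by
        gcongr
      linarith
    linarith
  · rw [hTsum]
    have hhigh : ∑ k ∈ range (m+1), ({p : ℕ × ℕ | p.1 * a + p.2 * b = x - k*c}.ncard : ℝ)
        ≤ ∑ k ∈ range (m+1), (((x:ℝ) - (k:ℝ)*c)/(a*b) + 2) := by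
      apply Finset.sum_le_sum
      intro k hk
      have := (two_var_bound a b ha hb hab (x - k*c)).2
      rw [hcast k hk] at this; exact this
    have hsum : ∑ k ∈ range (m+1), (((x:ℝ) - (k:ℝ)*c)/(a*b) + 2)
        = S/(a*b) + 2*((m:ℝ)+1) := by
      rw [Finset.sum_add_distrib, ← Finset.sum_div, hS, Finset.sum_const, card_range]
      push_cast; ring
    rw [hsum] at hhigh
    have h1 : S/(a*b) ≤ (((x:ℝ)+c)^2/(2*c))/(a*b) := by
      gcongr
    linarith
end Aux

/-- For pairwise coprime positive integers `a, b, c`, the denumerant `T` of `⟨a,b,c⟩`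
satisfies `T x / x² → 1/(2abc)` as `x → ∞`. -/
theorem denumerant_three_gens_asymptotic (a b c : ℕ) (ha : 0 < a) (hb : 0 < b) (hc : 0 < c)
    (hab : Nat.Coprime a b) (hac : Nat.Coprime a c) (hbc : Nat.Coprime b c)
    (T : ℕ → ℕ)
    (hT : ∀ x, T x = {p : ℕ × ℕ × ℕ | p.1 * a + p.2.1 * b + p.2.2 * c = x}.ncard) :
    Tendsto (fun x : ℕ => (T x : ℝ) / (x : ℝ) ^ 2) atTop (nhds (1 / (2 * a * b * c))) := by
  have har : (0:ℝ) < a := by exact_mod_cast ha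
  have hbr : (0:ℝ) < b := by exact_mod_cast hb
  have hcr : (0:ℝ) < c := by exact_mod_cast hc
  set F : ℝ → ℝ := fun u => (1/(2*(c:ℝ)))/((a:ℝ)*b) - 2*(u/(c:ℝ) + u^2) with hF
  set H : ℝ → ℝ := fun u => ((1+(c:ℝ)*u)^2/(2*(c:ℝ)))/((a:ℝ)*b) + 2*(u/(c:ℝ) + u^2) with hH
  have h0 : Tendsto (fun x:ℕ => 1/(x:ℝ)) atTop (nhds 0) := tendsto_one_div_atTop_nhds_zero_nat
  have hFc : Continuous F := by fun_prop
  have hHc : Continuous H := by fun_prop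
  have hF0 : F 0 = 1 / (2 * a * b * c) := by
    rw [hF]; simp only; rw [zero_div, zero_pow (by norm_num), add_zero, mul_zero, sub_zero]
    field_simp
  have hH0 : H 0 = 1 / (2 * a * b * c) := by
    rw [hH]; simp only
    norm_num
    field_simp
  have hgl : Tendsto (fun x:ℕ => F (1/(x:ℝ))) atTop (nhds (1 / (2 * a * b * c))) := by
    rw [← hF0]; exact (hFc.tendsto 0).comp h0
  have hhl : Tendsto (fun x:ℕ => H (1/(x:ℝ))) atTop (nhds (1 / (2 * a * b * c))) := by
    rw [← hH0]; exact (hHc.tendsto 0).comp h0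
  apply tendsto_of_tendsto_of_tendsto_of_le_of_le' hgl hhl
  · filter_upwards [eventually_ge_atTop 1] with x hx
    have hxr : (0:ℝ) < x := by exact_mod_cast hx
    have hbd := (T_bounds a b c ha hb hc hab x).1
    rw [← hT x] at hbd
    have step : F (1/(x:ℝ)) = (((x:ℝ)^2/(2*c))/(a*b) - 2*((x:ℝ)/c + 1)) / (x:ℝ)^2 := by
      rw [hF]; simp only; field_simp
    rw [step]
    gcongr
  · filter_upwards [eventually_ge_atTop 1] with x hx
    have hxr : (0:ℝ) < x := by exact_mod_cast hx
    have hbd := (T_bounds a b c ha hb hc hab x).2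
    rw [← hT x] at hbd
    have step : H (1/(x:ℝ)) = ((((x:ℝ)+c)^2/(2*c))/(a*b) + 2*((x:ℝ)/c + 1)) / (x:ℝ)^2 := by
      rw [hH]; simp only; field_simp
    rw [step]
    gcongr
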